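/- A set T of real numbers is connected in Cantor's sense if and only if its closure is an interval (equivalently, T is dense in an interval), provided T is nonempty. In particular, every dense subset of ℝ is Cantor-connected. -/

import Mathlib

def CantorConnected (T : Set ℝ) : Prop :=
  ∀ t ∈ T, ∀ t' ∈ T, ∀ ε : ℝ, 0 < ε →
    ∃ n : ℕ, ∃ f : Fin (n + 2) → ℝ, (∀ i, f i ∈ T) ∧ f 0 = t ∧ f (Fin.last (n + 1)) = t' ∧
      ∀ i : Fin (n + 1), |f i.castSucc - f i.succ| < ε

lemma bwd (T : Set ℝ) (h : (closure T).OrdConnected) : CantorConnected T := by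
  classical
  intro t ht t' ht' ε hε
  obtain ⟨n, hn⟩ := exists_nat_gt (3 * |t' - t| / ε)
  set d : ℝ := (t' - t) / (n + 1) with hd
  have hn1 : (0:ℝ) < n + 1 := by positivity
  have hdlt : |d| < ε / 3 := by
    rw [hd, abs_div, abs_of_pos hn1, div_lt_iff₀ hn1]
    rw [div_lt_iff₀ hε] at hn
    nlinarith [abs_nonneg (t' - t)]
  set z : Fin (n + 2) → ℝ := fun i => t + i * d with hzdef
  have hz0 : z 0 = t := by norm_num [hzdef]
  have ht'sum : t' = t + (n + 1) * d := by rw [hd]; field_simp; ring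
  have hzl : z (Fin.last (n + 1)) = t' := by
    simp only [hzdef, Fin.val_last]
    push_cast
    rw [ht'sum]
  have hzc : ∀ i, z i ∈ closure T := by
    intro i
    have hzi : z i = t + i * d := rfl
    have hi : (i : ℝ) ≤ n + 1 := by exact_mod_cast Fin.is_le i
    have hi0 : (0:ℝ) ≤ (i : ℝ) := by positivity
    have htT : t ∈ closure T := subset_closure ht
    have ht'T : t' ∈ closure T := subset_closure ht'
    rcases le_or_gt 0 d with hd0 | hd0
    · refine h.out htT ht'T ⟨?_, ?_⟩
      · rw [hzi]; nlinarith
      · rw [hzi, ht'sum]; nlinarith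
    · refine h.out ht'T htT ⟨?_, ?_⟩
      · rw [hzi, ht'sum]; nlinarith
      · rw [hzi]; nlinarith
  have hpick : ∀ i, ∃ u, u ∈ T ∧ |u - z i| < ε / 3 := by
    intro i
    obtain ⟨u, hu, hdu⟩ := (Metric.mem_closure_iff.mp (hzc i)) (ε / 3) (by linarith)
    exact ⟨u, hu, by rw [Real.dist_eq, abs_sub_comm] at hdu; exact hdu⟩
  choose g hgT hgz using hpick
  set F : Fin (n + 2) → ℝ :=
    fun i => if i = 0 then t else if i = Fin.last (n + 1) then t' else g i with hF
  have hlne : Fin.last (n + 1) ≠ (0 : Fin (n + 2)) := by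
    simp [Fin.ext_iff]
  have key : ∀ j : Fin (n + 2), |F j - z j| < ε / 3 := by
    intro j
    by_cases h0 : j = 0
    · simp [hF, h0, hz0]; positivity
    · by_cases hl : j = Fin.last (n + 1)
      · simp [hF, h0, hl, hzl]; positivity
      · simp only [hF, if_neg h0, if_neg hl]; exact hgz j
  refine ⟨n, F, ?_, ?_, ?_, ?_⟩
  · intro i
    by_cases h0 : i = 0
    · simp [hF, h0]; exact ht
    · by_cases hl : i = Fin.last (n + 1)
      · simp [hF, h0, hl]; exact ht'
      · simp only [hF, if_neg h0, if_neg hl]; exact hgT i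
  · simp [hF]
  · simp [hF, hlne]
  · intro i
    have hzd : z i.succ - z i.castSucc = d := by
      simp only [hzdef, Fin.val_succ, Fin.coe_castSucc]
      push_cast
      ring
    obtain ⟨a1, a2⟩ := abs_sub_lt_iff.mp (key i.castSucc)
    obtain ⟨b1, b2⟩ := abs_sub_lt_iff.mp (key i.succ)
    obtain ⟨c1, c2⟩ := abs_lt.mp hdlt
    have e1 : F i.castSucc - F i.succ =
        (F i.castSucc - z i.castSucc) + (z i.succ - F i.succ) - (z i.succ - z i.castSucc) := by
      ring
    have e2 : F i.succ - F i.castSucc =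
        (F i.succ - z i.succ) + (z i.castSucc - F i.castSucc) + (z i.succ - z i.castSucc) := by
      ring
    rw [abs_sub_lt_iff]
    rw [hzd] at e1 e2
    clear_value F z d
    constructor
    · rw [e1]; linarith
    · rw [e2]; linarith

lemma fwd (T : Set ℝ) (h : CantorConnected T) : (closure T).OrdConnected := by
  constructor
  intro x hx y hy z hz
  rw [Metric.mem_closure_iff]
  intro ε hε
  obtain ⟨a, ha, hda⟩ := Metric.mem_closure_iff.mp hx ε hε
  obtain ⟨b, hb, hdb⟩ := Metric.mem_closure_iff.mp hy ε hε
  obtain ⟨n, f, hfT, hf0, hfl, hstep⟩ := h a ha b hb ε hε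
  by_contra hc
  push_neg at hc
  have habs : ∀ i, ε ≤ |z - f i| := by
    intro i
    have := hc (f i) (hfT i)
    rwa [Real.dist_eq] at this
  have hxz : x ≤ z := hz.1
  have hzy : z ≤ y := hz.2
  rw [Real.dist_eq] at hda hdb
  obtain ⟨hda1, hda2⟩ := abs_lt.mp hda
  obtain ⟨hdb1, hdb2⟩ := abs_lt.mp hdb
  have hind : ∀ i : Fin (n + 2), f i ≤ z - ε := by
    intro i
    induction i using Fin.induction with
    | zero =>
      have h0 := habs 0
      rw [hf0] at h0 ⊢
      rcases le_abs.mp h0 with h' | h'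
      · linarith
      · exfalso; linarith
    | succ i ih =>
      obtain ⟨hs1, hs2⟩ := abs_sub_lt_iff.mp (hstep i)
      have h2 := habs i.succ
      rcases le_abs.mp h2 with h' | h'
      · linarith
      · exfalso; linarith
  have hlast := hind (Fin.last (n + 1))
  rw [hfl] at hlast
  linarith

theorem stmt_3 :
    (∀ T : Set ℝ, T.Nonempty → (CantorConnected T ↔ (closure T).OrdConnected)) ∧
    (∀ T : Set ℝ, Dense T → CantorConnected T) := by
  constructor
  · intro T _
    exact ⟨fwd T, bwd T⟩
  · intro T hd
    apply bwd
    rw [hd.closure_eq]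
    exact Set.ordConnected_univ
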